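/- Every torsion subgroup of a circularly orderable group with finite torsion subgroup is cyclic; more specifically, if G admits a left-invariant circular order and T ≤ G is a finite subgroup, then T is cyclic. -/

import Mathlib

/-- A circular order (as a set) on `G`: a cocycle `c : G³ → {-1,0,1}`
vanishing exactly on degenerate triples and satisfying the 2-cocycle identity. -/
def IsCircularOrder {G : Type*} (c : G → G → G → ℤ) : Prop :=
  (∀ x y z : G, c x y z = -1 ∨ c x y z = 0 ∨ c x y z = 1) ∧
  (∀ x y z : G, c x y z = 0 ↔ (x = y ∨ y = z ∨ x = z)) ∧
  (∀ g₀ g₁ g₂ g₃ : G, c g₁ g₂ g₃ - c g₀ g₂ g₃ + c g₀ g₁ g₃ - c g₀ g₁ g₂ = 0)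

/-- Invariance of a circular order under left multiplication. -/
def IsLeftInvariant {G : Type*} [Group G] (c : G → G → G → ℤ) : Prop :=
  ∀ g x y z : G, c (g * x) (g * y) (g * z) = c x y z

namespace CircAux

variable {H : Type*}

theorem antisym (c : H → H → H → ℤ) (hc : IsCircularOrder c) (p x y : H) :
    c p y x = - c p x y := by
  obtain ⟨hval, hdeg, hcoc⟩ := hc
  have h := hcoc p x y x
  have h1 : c x y x = 0 := (hdeg x y x).2 (Or.inr (Or.inr rfl))
  have h2 : c p x x = 0 := (hdeg p x x).2 (Or.inr (Or.inl rfl))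
  linarith

theorem cycl (c : H → H → H → ℤ) (hc : IsCircularOrder c) (x y z : H) :
    c y z x = c x y z := by
  obtain ⟨hval, hdeg, hcoc⟩ := hc
  have h := hcoc x y z x
  have h1 : c x z x = 0 := (hdeg x z x).2 (Or.inr (Or.inr rfl))
  have h2 : c x y x = 0 := (hdeg x y x).2 (Or.inr (Or.inr rfl))
  linarith

theorem transit (c : H → H → H → ℤ) (hc : IsCircularOrder c) (p x y z : H)
    (h1 : c p x y = 1) (h2 : c p y z = 1) : c p x z = 1 := by
  obtain ⟨hval, hdeg, hcoc⟩ := hc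
  have h := hcoc p x y z
  rcases hval x y z with h3 | h3 | h3 <;> rcases hval p x z with h4 | h4 | h4 <;> linarith

theorem ne_of_one {H : Type*} (c : H → H → H → ℤ) (hc : IsCircularOrder c) {x y z : H}
    (h : c x y z = 1) : x ≠ y ∧ y ≠ z ∧ x ≠ z := by
  obtain ⟨hval, hdeg, hcoc⟩ := hc
  refine ⟨?_, ?_, ?_⟩
  · rintro rfl; rw [(hdeg _ _ _).2 (Or.inl rfl)] at h; norm_num at h
  · rintro rfl; rw [(hdeg _ _ _).2 (Or.inr (Or.inl rfl))] at h; norm_num at h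
  · rintro rfl; rw [(hdeg _ _ _).2 (Or.inr (Or.inr rfl))] at h; norm_num at h

theorem main {H : Type*} [Group H] [Finite H] (c : H → H → H → ℤ)
    (hc : IsCircularOrder c) (hl : IsLeftInvariant c) : IsCyclic H := by
  classical
  rcases subsingleton_or_nontrivial H with hs | hn
  · infer_instance
  obtain ⟨hval, hdeg, hcoc⟩ := hc
  -- the strict total order based at 1
  set r : H → H → Prop := fun x y => (x = 1 ∧ y ≠ 1) ∨ c 1 x y = 1 with hr
  have hirr : ∀ x, ¬ r x x := by
    rintro x (⟨h1, h2⟩ | h)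
    · exact h2 h1
    · rw [(hdeg 1 x x).2 (Or.inr (Or.inl rfl))] at h; norm_num at h
  have htrans : ∀ x y z, r x y → r y z → r x z := by
    rintro x y z (⟨hx1, hy1⟩ | h1) (⟨hy1', hz1⟩ | h2)
    · exact absurd hy1' hy1
    · exact Or.inl ⟨hx1, (ne_of_one c ⟨hval, hdeg, hcoc⟩ h2).2.2.symm⟩
    · exact absurd hy1'.symm (ne_of_one c ⟨hval, hdeg, hcoc⟩ h1).2.2
    · exact Or.inr (transit c ⟨hval, hdeg, hcoc⟩ 1 x y z h1 h2)
  have htri : ∀ x y, r x y ∨ x = y ∨ r y x := by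
    intro x y
    by_cases hxy : x = y
    · exact Or.inr (Or.inl hxy)
    by_cases hx1 : x = 1
    · subst hx1; exact Or.inl (Or.inl ⟨rfl, Ne.symm hxy⟩)
    by_cases hy1 : y = 1
    · subst hy1; exact Or.inr (Or.inr (Or.inl ⟨rfl, hx1⟩))
    · have hne : c 1 x y ≠ 0 := fun h => by
        rcases (hdeg 1 x y).1 h with h | h | h
        exacts [hx1 h.symm, hxy h, hy1 h.symm]
      rcases hval 1 x y with h | h | h
      · refine Or.inr (Or.inr (Or.inr ?_))
        have := antisym c ⟨hval, hdeg, hcoc⟩ 1 x y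
        omega
      · exact absurd h hne
      · exact Or.inl (Or.inr h)
  letI : IsStrictTotalOrder H r :=
    { irrefl := hirr, trans := htrans, trichotomous := fun x y h1 h2 => ((htri x y).resolve_left h1).resolve_right h2 }
  letI : LinearOrder H := linearOrderOfSTO r
  have hlt : ∀ x y : H, x < y ↔ r x y := fun _ _ => Iff.rfl
  letI : Fintype H := Fintype.ofFinite H
  have hne : (Finset.univ.erase (1 : H)).Nonempty := by
    obtain ⟨b, hb⟩ := exists_ne (1 : H)
    exact ⟨b, Finset.mem_erase.2 ⟨hb, Finset.mem_univ b⟩⟩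
  set a : H := (Finset.univ.erase (1 : H)).min' hne with ha
  have ha1 : a ≠ 1 := (Finset.mem_erase.1 ((Finset.univ.erase (1 : H)).min'_mem hne)).1
  have hamin : ∀ y : H, y ≠ 1 → ¬ y < a := by
    intro y hy
    exact not_lt.2 (Finset.min'_le _ y (Finset.mem_erase.2 ⟨hy, Finset.mem_univ y⟩))
  -- successor lemma
  have hsucc : ∀ x y : H, c x y (x * a) ≠ 1 := by
    intro x y hxy
    have h1 : c 1 (x⁻¹ * y) a = 1 := by
      have h2 := hl x 1 (x⁻¹ * y) a
      rw [mul_one, mul_inv_cancel_left] at h2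
      rw [← h2]; exact hxy
    have hne1 := ne_of_one c ⟨hval, hdeg, hcoc⟩ h1
    exact hamin _ (Ne.symm hne1.1) ((hlt _ _).2 (Or.inr h1))
  -- the orbit of 1 under right multiplication by a is everything
  have horb : ∀ x : H, x ∈ Subgroup.zpowers a := by
    by_contra hcon
    push_neg at hcon
    set S : Finset H := Finset.univ.filter (fun x : H => x ∉ Subgroup.zpowers a) with hS
    have hsne : S.Nonempty := by
      obtain ⟨m, hm⟩ := hcon
      exact ⟨m, Finset.mem_filter.2 ⟨Finset.mem_univ m, hm⟩⟩
    set m : H := S.min' hsne with hmdef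
    have hmO : m ∉ Subgroup.zpowers a := (Finset.mem_filter.1 (S.min'_mem hsne)).2
    have hm1 : m ≠ 1 := fun h => hmO (h ▸ Subgroup.one_mem _)
    have hmaO : m * a⁻¹ ∉ Subgroup.zpowers a := by
      intro h
      exact hmO (by simpa using mul_mem h (Subgroup.mem_zpowers a))
    have hma1 : m * a⁻¹ ≠ 1 := by
      intro h
      exact hmaO (h ▸ Subgroup.one_mem _)
    have hle : m ≤ m * a⁻¹ :=
      Finset.min'_le S _ (Finset.mem_filter.2 ⟨Finset.mem_univ _, hmaO⟩)
    have hmne : m ≠ m * a⁻¹ := by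
      intro h
      apply ha1
      have h2 : m * 1 = m * a⁻¹ := by rw [mul_one, ← h]
      have h3 := mul_left_cancel h2
      exact inv_eq_one.1 h3.symm
    have hlt2 : m < m * a⁻¹ := lt_of_le_of_ne hle hmne
    have hr2 : r m (m * a⁻¹) := (hlt _ _).1 hlt2
    have hc2 : c 1 m (m * a⁻¹) = 1 := by
      rcases hr2 with ⟨h1, _⟩ | h
      · exact absurd h1 hm1
      · exact h
    have hc3 : c (m * a⁻¹) 1 m = 1 :=
      (cycl c ⟨hval, hdeg, hcoc⟩ (m * a⁻¹) 1 m).symm.trans hc2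
    have := hsucc (m * a⁻¹) 1
    rw [inv_mul_cancel_right] at this
    exact this hc3
  exact ⟨⟨a, horb⟩⟩

end CircAux

/-- If `G` admits a left-invariant circular order, then every finite subgroup
of `G` is cyclic. -/
theorem finite_subgroup_of_circularlyOrderable_isCyclic {G : Type*} [Group G]
    (c : G → G → G → ℤ) (hc : IsCircularOrder c) (hl : IsLeftInvariant c)
    (T : Subgroup G) [Finite T] :
    IsCyclic T := by
  obtain ⟨hval, hdeg, hcoc⟩ := hc
  apply CircAux.main (fun x y z : T => c x y z)
  · refine ⟨fun x y z => hval x y z, fun x y z => ?_, fun a b x y => hcoc a b x y⟩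
    rw [hdeg]
    exact or_congr Subtype.coe_inj (or_congr Subtype.coe_inj Subtype.coe_inj)
  · intro g x y z
    exact hl g x y z
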